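/- arXiv:1609.07525 — 3 statements merged into one kernel-verified Lean document; each statement's English description precedes it below -/
import Mathlib

section
/- For a bijection π: I → J between two k-element subsets I, J of [n] with π(i) = i for all i ∈ I ∩ J, the parity of the number of crossings of π equals the parity of inv(π) plus the sum over i ∈ I of s_{i,π(i)}, i.e. (-1)^{xing(π)} = (-1)^{inv(π)} · ∏_{i∈I} (-1)^{s_{i,π(i)}}. -/
/-- The number of elements of `I` strictly between `i` and `j`. -/
def sBetween (I : Finset ℕ) (i j : ℕ) : ℕ :=
  (I.filter fun x => min i j < x ∧ x < max i j).card

/-- The number of crossings of the bijection `π : I → J`: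
pairs `(i₁, i₂) ∈ I × I` with `i₁ < i₂` and
`(i₁ − π(i₂))(π(i₂) − π(i₁))(π(i₁) − i₂)(i₂ − i₁) < 0`. -/
def xingCount (I : Finset ℕ) (π : ℕ → ℕ) : ℕ :=
  ((I ×ˢ I).filter fun p =>
    p.1 < p.2 ∧
      ((p.1 : ℤ) - (π p.2 : ℤ)) * ((π p.2 : ℤ) - (π p.1 : ℤ)) *
          ((π p.1 : ℤ) - (p.2 : ℤ)) * ((p.2 : ℤ) - (p.1 : ℤ)) < 0).card

private lemma prodIte {α : Type*} (s : Finset α) (q : α → Prop) [DecidablePred q] :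
    ∏ x ∈ s, (if q x then (-1:ℤ) else 1) = (-1:ℤ) ^ (s.filter q).card := by
  rw [Finset.prod_ite, Finset.prod_const, Finset.prod_const_one, mul_one]

private lemma sign_eq_signAux {k : ℕ} (σ : Equiv.Perm (Fin k)) :
    Equiv.Perm.sign σ = Equiv.Perm.signAux σ := by
  refine Equiv.Perm.swap_induction_on σ ?_ ?_
  · simp [Equiv.Perm.signAux_one]
  · intro f x y hxy ih
    rw [Equiv.Perm.sign_mul, Equiv.Perm.sign_swap hxy, Equiv.Perm.signAux_mul,
      Equiv.Perm.signAux_swap hxy, ih]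

private lemma key (a b c d : ℕ) (hab : a < b) (hcd : c ≠ d) (hcb : c ≠ b) (hda : d ≠ a) :
    (if ((a:ℤ) - d) * ((d:ℤ) - c) * ((c:ℤ) - b) * ((b:ℤ) - a) < 0 then (-1:ℤ) else 1)
      = (if d < c then (-1:ℤ) else 1) *
        ((if min a c < b ∧ b < max a c then (-1:ℤ) else 1) *
         (if min b d < a ∧ a < max b d then (-1:ℤ) else 1)) := by
  have hprod : (((a:ℤ) - d) * ((d:ℤ) - c) * ((c:ℤ) - b) * ((b:ℤ) - a) < 0) ↔
      ((a:ℤ) - d).sign * ((d:ℤ) - c).sign * ((c:ℤ) - b).sign * ((b:ℤ) - a).sign = -1 := by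
    rw [← Int.sign_eq_neg_one_iff_neg, Int.sign_mul, Int.sign_mul, Int.sign_mul]
  have h4 : ((b:ℤ) - a).sign = 1 := Int.sign_eq_one_of_pos (by omega)
  have hb1 : (min a c < b ∧ b < max a c) ↔ b < c := by omega
  have hb2 : (min b d < a ∧ a < max b d) ↔ d < a := by omega
  have s1 : ((a:ℤ) - d).sign = if d < a then 1 else -1 := by
    rcases lt_or_gt_of_ne hda with h | h
    · rw [if_pos h]; exact Int.sign_eq_one_of_pos (by omega)
    · rw [if_neg (by omega)]; exact Int.sign_eq_neg_one_of_neg (by omega)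
  have s2 : ((d:ℤ) - c).sign = if c < d then 1 else -1 := by
    rcases lt_or_gt_of_ne hcd with h | h
    · rw [if_pos h]; exact Int.sign_eq_one_of_pos (by omega)
    · rw [if_neg (by omega)]; exact Int.sign_eq_neg_one_of_neg (by omega)
  have s3 : ((c:ℤ) - b).sign = if b < c then 1 else -1 := by
    rcases lt_or_gt_of_ne hcb with h | h
    · rw [if_neg (by omega)]; exact Int.sign_eq_neg_one_of_neg (by omega)
    · rw [if_pos h]; exact Int.sign_eq_one_of_pos (by omega)
  simp only [hprod, s1, s2, s3, h4, hb1, hb2]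
  split_ifs <;> norm_num at * <;> omega

/-- Lemma 4.2 of the paper: for a bijection `π : I → J` between two `k`-element
subsets of `[n]` fixing `I ∩ J`, with standardized permutation `σ ∈ S_k`,
`(-1)^{xing(π)} = (-1)^{inv(π)} ∏_{i ∈ I} (-1)^{s_{i, π(i)}}`. -/
theorem xing_parity (n k : ℕ) (I J : Finset ℕ)
    (hIn : I ⊆ Finset.Icc 1 n) (hJn : J ⊆ Finset.Icc 1 n)
    (hI : I.card = k) (hJ : J.card = k)
    (π : ℕ → ℕ) (hbij : Set.BijOn π (I : Set ℕ) (J : Set ℕ))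
    (hfix : ∀ i ∈ I ∩ J, π i = i)
    (σ : Equiv.Perm (Fin k))
    (hσ : ∀ m : Fin k, π ((I.orderIsoOfFin hI m : ℕ)) = (J.orderIsoOfFin hJ (σ m) : ℕ)) :
    (-1 : ℤ) ^ xingCount I π =
      (Equiv.Perm.sign σ : ℤ) * ∏ i ∈ I, (-1 : ℤ) ^ sBetween I i (π i) := by
  classical
  set oI := I.orderIsoOfFin hI with hoI
  set oJ := J.orderIsoOfFin hJ with hoJ
  set T : Finset (ℕ × ℕ) := (I ×ˢ I).filter (fun p => p.1 < p.2) with hT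
  have memT : ∀ p ∈ T, p.1 ∈ I ∧ p.2 ∈ I ∧ p.1 < p.2 := by
    intro p hp
    rw [hT, Finset.mem_filter, Finset.mem_product] at hp
    exact ⟨hp.1.1, hp.1.2, hp.2⟩
  -- non-degeneracy facts
  have hinj : ∀ p ∈ T, π p.1 ≠ π p.2 := by
    intro p hp h
    obtain ⟨h1, h2, hlt⟩ := memT p hp
    exact absurd (hbij.2.1 h1 h2 h) hlt.ne
  have hcb : ∀ p ∈ T, π p.1 ≠ p.2 := by
    intro p hp h
    obtain ⟨h1, h2, hlt⟩ := memT p hp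
    have hJ2 : p.2 ∈ J := by have := hbij.1 h1; rwa [h] at this
    have : π p.2 = p.2 := hfix _ (Finset.mem_inter.2 ⟨h2, hJ2⟩)
    exact hinj p hp (h.trans this.symm)
  have hda : ∀ p ∈ T, π p.2 ≠ p.1 := by
    intro p hp h
    obtain ⟨h1, h2, hlt⟩ := memT p hp
    have hJ1 : p.1 ∈ J := by have := hbij.1 h2; rwa [h] at this
    have : π p.1 = p.1 := hfix _ (Finset.mem_inter.2 ⟨h1, hJ1⟩)
    exact hinj p hp (this.trans h.symm)
  -- Step 1 : LHS as a product over T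
  have step1 : (-1 : ℤ) ^ xingCount I π =
      ∏ p ∈ T, (if ((p.1:ℤ) - π p.2) * ((π p.2:ℤ) - π p.1) * ((π p.1:ℤ) - p.2) *
          ((p.2:ℤ) - p.1) < 0 then (-1:ℤ) else 1) := by
    rw [prodIte, xingCount, hT, Finset.filter_filter]
  -- Step 2 : sign σ as a product over T
  have step2 : (Equiv.Perm.sign σ : ℤ) =
      ∏ p ∈ T, (if π p.2 < π p.1 then (-1:ℤ) else 1) := by
    rw [sign_eq_signAux, Equiv.Perm.signAux]
    push_cast
    refine Finset.prod_bij' (fun x _ => ((oI x.2 : ℕ), (oI x.1 : ℕ)))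
      (fun p hp => ⟨oI.symm ⟨p.2, (memT p hp).2.1⟩, oI.symm ⟨p.1, (memT p hp).1⟩⟩)
      ?_ ?_ ?_ ?_ ?_
    · intro x hx
      rw [Equiv.Perm.mem_finPairsLT] at hx
      rw [hT, Finset.mem_filter, Finset.mem_product]
      exact ⟨⟨(oI x.2).2, (oI x.1).2⟩, Subtype.coe_lt_coe.2 (oI.lt_iff_lt.2 hx)⟩
    · intro p hp
      rw [Equiv.Perm.mem_finPairsLT]
      exact oI.symm.lt_iff_lt.2 (Subtype.mk_lt_mk.2 (memT p hp).2.2)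
    · intro x hx
      ext <;> simp
    · intro p hp
      simp
    · intro x hx
      rw [Equiv.Perm.mem_finPairsLT] at hx
      have e1 : π (oI x.1 : ℕ) = (oJ (σ x.1) : ℕ) := hσ x.1
      have e2 : π (oI x.2 : ℕ) = (oJ (σ x.2) : ℕ) := hσ x.2
      have hne : σ x.1 ≠ σ x.2 := fun h => hx.ne (σ.injective h).symm
      have : (σ x.1 ≤ σ x.2) ↔ π (oI x.1 : ℕ) < π (oI x.2 : ℕ) := by
        rw [e1, e2, Subtype.coe_lt_coe, oJ.lt_iff_lt]
        exact ⟨fun h => h.lt_of_ne hne, fun h => h.le⟩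
      rw [apply_ite (fun u : ℤˣ => (u : ℤ))]
      simp only [this]
      norm_num
  -- Step 3 : the sBetween product over T
  set F : ℕ × ℕ → ℤ := fun p =>
    if min p.1 (π p.1) < p.2 ∧ p.2 < max p.1 (π p.1) then (-1:ℤ) else 1 with hF
  set G : ℕ × ℕ → ℤ := fun p =>
    if min p.2 (π p.2) < p.1 ∧ p.1 < max p.2 (π p.2) then (-1:ℤ) else 1 with hG
  have step3 : (∏ i ∈ I, (-1 : ℤ) ^ sBetween I i (π i)) = ∏ p ∈ T, (F p * G p) := by
    have h1 : (∏ i ∈ I, (-1 : ℤ) ^ sBetween I i (π i)) = ∏ p ∈ I ×ˢ I, F p := by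
      rw [Finset.prod_product]
      refine Finset.prod_congr rfl fun i hi => ?_
      rw [sBetween, ← prodIte]
    rw [h1, ← Finset.prod_filter_mul_prod_filter_not (I ×ˢ I) (fun p => p.1 < p.2) F,
      ← Finset.prod_filter_mul_prod_filter_not
        ((I ×ˢ I).filter fun p => ¬ p.1 < p.2) (fun p => p.2 < p.1) F]
    have hdiag : ∏ p ∈ ((I ×ˢ I).filter fun p => ¬ p.1 < p.2).filter
        (fun p => ¬ p.2 < p.1), F p = 1 := by
      refine Finset.prod_eq_one fun p hp => ?_
      rw [Finset.mem_filter, Finset.mem_filter] at hp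
      have : p.1 = p.2 := by omega
      rw [hF]
      simp only
      rw [if_neg (by omega)]
    have hswap : ∏ p ∈ ((I ×ˢ I).filter fun p => ¬ p.1 < p.2).filter
        (fun p => p.2 < p.1), F p = ∏ p ∈ T, G p := by
      refine Finset.prod_bij' (fun p _ => p.swap) (fun p _ => p.swap) ?_ ?_ ?_ ?_ ?_
      · intro p hp
        rw [Finset.mem_filter, Finset.mem_filter, Finset.mem_product] at hp
        rw [hT, Finset.mem_filter, Finset.mem_product]
        simp only [Prod.fst_swap, Prod.snd_swap]
        exact ⟨⟨hp.1.1.2, hp.1.1.1⟩, hp.2⟩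
      · intro p hp
        obtain ⟨h1, h2, hlt⟩ := memT p hp
        rw [Finset.mem_filter, Finset.mem_filter, Finset.mem_product]
        simp only [Prod.fst_swap, Prod.snd_swap]
        exact ⟨⟨⟨h2, h1⟩, by omega⟩, hlt⟩
      · intro p _; simp
      · intro p _; simp
      · intro p hp; simp only [hF, hG, Prod.fst_swap, Prod.snd_swap]
    rw [hdiag, mul_one, hswap, ← Finset.prod_mul_distrib]
  -- put everything together
  rw [step1, step2, step3, ← Finset.prod_mul_distrib]
  refine Finset.prod_congr rfl fun p hp => ?_
  obtain ⟨h1, h2, hlt⟩ := memT p hp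
  have := key p.1 p.2 (π p.1) (π p.2) hlt (hinj p hp) (hcb p hp) (hda p hp)
  rw [hF, hG]
  exact this
end

section
/- If N is a finite directed graph with no directed cycles, then the minor Δ_{I,J}(M) of the weighted path matrix M on rows I and columns J equals Σ_π sgn(π) Σ_{P ∈ P_{I,J,π}} wt(P), the signed sum over families of pairwise vertex-disjoint paths joining I to J (Lindström–Gessel–Viennot lemma). -/
variable {V E : Type*}

/-- `es` is the edge list of a directed path from `i` to `j`. -/
def IsPath (src tgt : E → V) (es : List E) (i j : V) : Prop :=
  es.map src ++ [j] = i :: es.map tgt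

/-- The list of vertices visited by a path starting at `i` with edge list `es`. -/
def pvisits (tgt : E → V) (i : V) (es : List E) : List V := i :: es.map tgt

/-- The exponent (as a monomial) of the weight of the path with edge list `es`. -/
noncomputable def expOf [DecidableEq E] (es : List E) : E →₀ ℕ :=
  (es.map fun e => Finsupp.single e 1).sum

/-- The weighted path matrix: the `(i,j)` entry is `∑_{P : i ⇝ j} wt(P)`. -/
noncomputable def pathMatrix [DecidableEq E] (src tgt : E → V) (i j : V) :
    MvPowerSeries E ℝ :=
  fun d => (Nat.card {es : List E // IsPath src tgt es i j ∧ expOf es = d} : ℝ)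

/-- The weight `∏_{e ∈ es} x_e` of a path, as a power series. -/
noncomputable def wtL (es : List E) : MvPowerSeries E ℝ :=
  (es.map fun e => (MvPowerSeries.X e : MvPowerSeries E ℝ)).prod

/-- `(P₁, …, P_n) ∈ P_{I,J,π}`: a family of pairwise vertex-disjoint self-avoiding
paths with `P k : iI k ⇝ iJ (π k)`. -/
def IsPathFamily {n : ℕ} (src tgt : E → V) (iI iJ : Fin n → V)
    (π : Equiv.Perm (Fin n)) (P : Fin n → List E) : Prop :=
  (∀ k, IsPath src tgt (P k) (iI k) (iJ (π k))) ∧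
  (∀ k, (pvisits tgt (iI k) (P k)).Nodup) ∧
  (∀ k k', k ≠ k' → ∀ v, v ∈ pvisits tgt (iI k) (P k) → v ∉ pvisits tgt (iI k') (P k'))
-- basic path lemmas
namespace LGV
variable {src tgt : E → V} {es : List E} {i j v : V}

theorem isPath_nil : IsPath src tgt [] i j ↔ i = j := by
  simp [IsPath, eq_comm]

theorem isPath_cons {e : E} : IsPath src tgt (e :: es) i j ↔
    src e = i ∧ IsPath src tgt es (tgt e) j := by
  simp [IsPath]

theorem isPath_append {a b : List E} : IsPath src tgt (a ++ b) i j ↔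
    ∃ v, IsPath src tgt a i v ∧ IsPath src tgt b v j := by
  induction a generalizing i with
  | nil => simp [isPath_nil]
  | cons e a ih =>
      simp only [List.cons_append, isPath_cons, ih]
      constructor
      · rintro ⟨h1, v, h2, h3⟩; exact ⟨v, ⟨h1, h2⟩, h3⟩
      · rintro ⟨v, ⟨h1, h2⟩, h3⟩; exact ⟨h1, v, h2, h3⟩

theorem isPath_right_unique {j' : V} (h : IsPath src tgt es i j)
    (h' : IsPath src tgt es i j') : j = j' := by
  unfold IsPath at h h'
  have := h.trans h'.symm
  simpa using this

theorem pvisits_append (a b : List E) :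
    pvisits tgt i (a ++ b) = pvisits tgt i a ++ b.map tgt := by
  simp [pvisits]

theorem mem_pvisits_split (h : IsPath src tgt es i j) (hv : v ∈ pvisits tgt i es) :
    ∃ a b, es = a ++ b ∧ IsPath src tgt a i v ∧ IsPath src tgt b v j := by
  induction es generalizing i with
  | nil =>
      simp [pvisits] at hv
      subst hv
      exact ⟨[], [], by simp, isPath_nil.2 rfl, h⟩
  | cons e es ih =>
      rcases (show v = i ∨ v ∈ pvisits tgt (tgt e) es by
        simpa [pvisits] using hv) with rfl | hv'
      · exact ⟨[], e :: es, by simp, isPath_nil.2 rfl, h⟩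
      · obtain ⟨h1, h2⟩ := isPath_cons.1 h
        obtain ⟨a, b, rfl, ha, hb⟩ := ih h2 hv'
        exact ⟨e :: a, b, by simp, isPath_cons.2 ⟨h1, ha⟩, hb⟩

variable (hacyclic : ∀ (v : V) (es : List E), es ≠ [] → ¬ IsPath src tgt es v v)
include hacyclic

theorem nodup_pvisits (h : IsPath src tgt es i j) : (pvisits tgt i es).Nodup := by
  induction es generalizing i with
  | nil => simp [pvisits]
  | cons e es ih =>
      obtain ⟨h1, h2⟩ := isPath_cons.1 h
      have hnd := ih h2
      have hni : i ∉ pvisits tgt (tgt e) es := by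
        intro hi
        obtain ⟨a, b, rfl, ha, hb⟩ := mem_pvisits_split h2 hi
        exact hacyclic i (e :: a) (by simp) (isPath_cons.2 ⟨h1, ha⟩)
      have : pvisits tgt i (e :: es) = i :: pvisits tgt (tgt e) es := by
        simp [pvisits]
      rw [this]
      exact List.nodup_cons.2 ⟨hni, hnd⟩

theorem split_unique_le {a b a' b' : List E} (hlen : a.length ≤ a'.length)
    (heq : a ++ b = a' ++ b') (ha : IsPath src tgt a i v) (ha' : IsPath src tgt a' i v) :
    a = a' ∧ b = b' := by
  have h3 : a'.take a.length = a := by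
    rw [← List.take_append_of_le_length hlen, ← heq, List.take_left]
  have hpre : a' = a ++ a'.drop a.length := by
    calc a' = a'.take a.length ++ a'.drop a.length := (List.take_append_drop _ _).symm
      _ = a ++ a'.drop a.length := by rw [h3]
  obtain ⟨w, hw1, hw2⟩ := isPath_append.1 (hpre ▸ ha')
  have hwv : w = v := isPath_right_unique hw1 ha
  subst hwv
  have hnil : a'.drop a.length = [] := by
    by_contra hne
    exact hacyclic w _ hne hw2
  have haa : a = a' := by rw [hpre, hnil, List.append_nil]
  subst haa
  exact ⟨rfl, by simpa using heq⟩

theorem split_unique {a b a' b' : List E}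
    (heq : a ++ b = a' ++ b') (ha : IsPath src tgt a i v) (ha' : IsPath src tgt a' i v) :
    a = a' ∧ b = b' := by
  rcases le_total a.length a'.length with h | h
  · exact split_unique_le hacyclic h heq ha ha'
  · obtain ⟨h1, h2⟩ := split_unique_le hacyclic h heq.symm ha' ha
    exact ⟨h1.symm, h2.symm⟩

end LGV
namespace LGV
variable {src tgt : E → V} {es : List E} {i j v : V}

theorem wtL_eq_monomial [DecidableEq E] (es : List E) :
    wtL es = (MvPowerSeries.monomial (expOf es)) (1 : ℝ) := by
  induction es with
  | nil => simp [wtL, expOf]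
  | cons e es ih =>
      have h1 : wtL (e :: es) = MvPowerSeries.X e * wtL es := by simp [wtL]
      have h2 : expOf (e :: es) = Finsupp.single e 1 + expOf es := by simp [expOf]
      rw [h1, ih, MvPowerSeries.X, MvPowerSeries.monomial_mul_monomial, h2, one_mul]

theorem wtL_append (a b : List E) : wtL (a ++ b) = wtL a * wtL b := by
  simp [wtL]

variable (hacyclic : ∀ (v : V) (es : List E), es ≠ [] → ¬ IsPath src tgt es v v)
include hacyclic

theorem paths_finite [Fintype E] [DecidableEq E] (i j : V) :
    {es : List E | IsPath src tgt es i j}.Finite := by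
  apply Set.Finite.subset
    (Set.finite_range (fun l : {l : List E // l.Nodup} => (l : List E)))
  intro es hes
  have hnd : es.Nodup := ((List.nodup_cons.1 (nodup_pvisits hacyclic hes)).2).of_map _
  exact ⟨⟨es, hnd⟩, rfl⟩

theorem pathMatrix_eq [Fintype E] [DecidableEq E] (i j : V) :
    pathMatrix src tgt i j = ∑ es ∈ (paths_finite hacyclic i j).toFinset, wtL es := by
  classical
  ext d
  have hc : (MvPowerSeries.coeff d) (pathMatrix src tgt i j)
      = (Nat.card {es : List E // IsPath src tgt es i j ∧ expOf es = d} : ℝ) := rfl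
  rw [hc, map_sum]
  have hco : ∀ es ∈ (paths_finite hacyclic i j).toFinset,
      (MvPowerSeries.coeff d) (wtL es) = if expOf es = d then 1 else 0 := by
    intro es _
    rw [wtL_eq_monomial, MvPowerSeries.coeff_monomial]
    simp [eq_comm]
  rw [Finset.sum_congr rfl hco, Finset.sum_boole]
  have hset : {es : List E | IsPath src tgt es i j ∧ expOf es = d}
      ⊆ {es : List E | IsPath src tgt es i j} := fun x hx => hx.1
  have hfin := (paths_finite hacyclic i j).subset hset
  have hcard : Nat.card {es : List E // IsPath src tgt es i j ∧ expOf es = d}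
      = hfin.toFinset.card := Nat.card_eq_card_finite_toFinset hfin
  have hfs : hfin.toFinset
      = (paths_finite hacyclic i j).toFinset.filter (fun es => expOf es = d) := by
    ext es; simp [Set.mem_setOf_eq]
  rw [hcard, hfs]

end LGV
namespace LGV
open Classical in
section
variable {n : ℕ} {src tgt : E → V} {iI iJ : Fin n → V}
  {x : Equiv.Perm (Fin n) × (Fin n → List E)}

theorem end_mem_pvisits {es : List E} {i j : V} (h : IsPath src tgt es i j) :
    j ∈ pvisits tgt i es := by
  unfold IsPath at h
  rw [pvisits, ← h]
  simp

theorem pvisits_ne_nil {es : List E} {i : V} : pvisits tgt i es ≠ [] := by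
  simp [pvisits]

theorem length_pvisits (es : List E) (i : V) :
    (pvisits tgt i es).length = es.length + 1 := by simp [pvisits]

theorem pvisits_getLast {es : List E} {i j : V} (h : IsPath src tgt es i j) :
    (pvisits tgt i es).getLast pvisits_ne_nil = j := by
  unfold IsPath at h
  have : pvisits tgt i es = es.map src ++ [j] := h.symm
  rw [show (pvisits tgt i es).getLast pvisits_ne_nil
      = ((es.map src ++ [j]).getLast (by simp)) from by congr 1]
  simp

theorem pvisits_getElem_end {es : List E} {i j : V} (h : IsPath src tgt es i j)
    (hl : es.length < (pvisits tgt i es).length) :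
    (pvisits tgt i es)[es.length] = j := by
  have h1 := pvisits_getLast h
  rw [List.getLast_eq_getElem] at h1
  simpa [length_pvisits] using h1

/-- second half of a split is a path -/
theorem isPath_snd {es a b : List E} {i j v : V} (hP : IsPath src tgt es i j)
    (hab : es = a ++ b) (ha : IsPath src tgt a i v) : IsPath src tgt b v j := by
  subst hab
  obtain ⟨w, hw1, hw2⟩ := isPath_append.1 hP
  rwa [isPath_right_unique hw1 ha] at hw2

/-- visits of a family member -/
def visF (tgt : E → V) (iI : Fin n → V) (x : Equiv.Perm (Fin n) × (Fin n → List E))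
    (k : Fin n) : List V := pvisits tgt (iI k) (x.2 k)

def Fam (src tgt : E → V) (iI iJ : Fin n → V)
    (x : Equiv.Perm (Fin n) × (Fin n → List E)) : Prop :=
  ∀ k, IsPath src tgt (x.2 k) (iI k) (iJ (x.1 k))

def Meets (tgt : E → V) (iI : Fin n → V) (x : Equiv.Perm (Fin n) × (Fin n → List E))
    (k : Fin n) : Prop :=
  ∃ k', k' ≠ k ∧ ∃ v, v ∈ visF tgt iI x k ∧ v ∈ visF tgt iI x k'

def Crossing (tgt : E → V) (iI : Fin n → V)
    (x : Equiv.Perm (Fin n) × (Fin n → List E)) : Prop :=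
  ∃ k, Meets tgt iI x k

theorem min'_eq_of {α : Type*} [LinearOrder α] {s : Finset α} (h : s.Nonempty) {a : α}
    (ha : a ∈ s) (hmin : ∀ b ∈ s, a ≤ b) : s.min' h = a :=
  le_antisymm (hmin _ (Finset.min'_mem s h)) (Finset.min'_le s a ha) |>.symm

noncomputable def k0 (hx : Crossing tgt iI x) : Fin n :=
  (Finset.univ.filter (Meets tgt iI x)).min'
    (by obtain ⟨k, hk⟩ := hx; exact ⟨k, Finset.mem_filter.2 ⟨Finset.mem_univ _, hk⟩⟩)

theorem meets_k0 (hx : Crossing tgt iI x) : Meets tgt iI x (k0 hx) := by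
  have := Finset.min'_mem (Finset.univ.filter (Meets tgt iI x))
    (by obtain ⟨k, hk⟩ := hx; exact ⟨k, Finset.mem_filter.2 ⟨Finset.mem_univ _, hk⟩⟩)
  exact (Finset.mem_filter.1 this).2

theorem k0_min (hx : Crossing tgt iI x) {k : Fin n} (hk : Meets tgt iI x k) :
    k0 hx ≤ k :=
  Finset.min'_le _ _ (Finset.mem_filter.2 ⟨Finset.mem_univ _, hk⟩)

theorem k0_eq (hx : Crossing tgt iI x) {a : Fin n} (ha : Meets tgt iI x a)
    (hmin : ∀ b, Meets tgt iI x b → a ≤ b) : k0 hx = a :=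
  min'_eq_of _ (Finset.mem_filter.2 ⟨Finset.mem_univ _, ha⟩)
    (fun b hb => hmin b (Finset.mem_filter.1 hb).2)

theorem exists_m0 (hx : Crossing tgt iI x) :
    ∃ m, ∃ _ : m < (visF tgt iI x (k0 hx)).length,
      ∃ k', k' ≠ k0 hx ∧ (visF tgt iI x (k0 hx))[m] ∈ visF tgt iI x k' := by
  obtain ⟨k', hne, v, hv1, hv2⟩ := meets_k0 hx
  obtain ⟨m, hm, hme⟩ := List.mem_iff_getElem.1 hv1
  exact ⟨m, hm, k', hne, by rwa [hme]⟩

noncomputable def m0 (hx : Crossing tgt iI x) : ℕ := Nat.find (exists_m0 hx)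

theorem m0_lt (hx : Crossing tgt iI x) : m0 hx < (visF tgt iI x (k0 hx)).length :=
  (Nat.find_spec (exists_m0 hx)).fst

theorem m0_spec (hx : Crossing tgt iI x) :
    ∃ _ : m0 hx < (visF tgt iI x (k0 hx)).length,
      ∃ k', k' ≠ k0 hx ∧ (visF tgt iI x (k0 hx))[m0 hx] ∈ visF tgt iI x k' :=
  Nat.find_spec (exists_m0 hx)

theorem m0_le (hx : Crossing tgt iI x) {m : ℕ}
    (h : ∃ _ : m < (visF tgt iI x (k0 hx)).length,
      ∃ k', k' ≠ k0 hx ∧ (visF tgt iI x (k0 hx))[m] ∈ visF tgt iI x k') :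
    m0 hx ≤ m :=
  Nat.find_min' _ h

noncomputable def v0 (hx : Crossing tgt iI x) : V :=
  (visF tgt iI x (k0 hx)).getD (m0 hx) (iI (k0 hx))

theorem v0_eq (hx : Crossing tgt iI x) :
    v0 hx = (visF tgt iI x (k0 hx))[m0 hx]'(m0_lt hx) := by
  rw [v0, List.getD_eq_getElem _ _ (m0_lt hx)]

theorem v0_mem (hx : Crossing tgt iI x) : v0 hx ∈ visF tgt iI x (k0 hx) := by
  rw [v0_eq]; exact List.getElem_mem _

theorem v0_cross (hx : Crossing tgt iI x) :
    ∃ k', k' ≠ k0 hx ∧ v0 hx ∈ visF tgt iI x k' := by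
  obtain ⟨_, k', hne, hmem⟩ := Nat.find_spec (exists_m0 hx)
  exact ⟨k', hne, by rwa [v0_eq]⟩

theorem m0_min (hx : Crossing tgt iI x) {m : ℕ} (hm : m < m0 hx)
    (hlt : m < (visF tgt iI x (k0 hx)).length) :
    ¬ ∃ k', k' ≠ k0 hx ∧ (visF tgt iI x (k0 hx))[m] ∈ visF tgt iI x k' := by
  intro h
  exact Nat.find_min (exists_m0 hx) hm ⟨hlt, h⟩

noncomputable def k1 (hx : Crossing tgt iI x) : Fin n :=
  (Finset.univ.filter (fun k => k ≠ k0 hx ∧ v0 hx ∈ visF tgt iI x k)).min'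
    (by obtain ⟨k', h1, h2⟩ := v0_cross hx
        exact ⟨k', Finset.mem_filter.2 ⟨Finset.mem_univ _, h1, h2⟩⟩)

theorem k1_spec (hx : Crossing tgt iI x) :
    k1 hx ≠ k0 hx ∧ v0 hx ∈ visF tgt iI x (k1 hx) := by
  have := Finset.min'_mem
    (Finset.univ.filter (fun k => k ≠ k0 hx ∧ v0 hx ∈ visF tgt iI x k))
    (by obtain ⟨k', h1, h2⟩ := v0_cross hx
        exact ⟨k', Finset.mem_filter.2 ⟨Finset.mem_univ _, h1, h2⟩⟩)
  exact (Finset.mem_filter.1 this).2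

theorem k1_min (hx : Crossing tgt iI x) {k : Fin n} (h1 : k ≠ k0 hx)
    (h2 : v0 hx ∈ visF tgt iI x k) : k1 hx ≤ k :=
  Finset.min'_le _ _ (Finset.mem_filter.2 ⟨Finset.mem_univ _, h1, h2⟩)

theorem k1_eq (hx : Crossing tgt iI x) {a : Fin n} (h1 : a ≠ k0 hx)
    (h2 : v0 hx ∈ visF tgt iI x a)
    (hmin : ∀ b, b ≠ k0 hx → v0 hx ∈ visF tgt iI x b → a ≤ b) : k1 hx = a :=
  min'_eq_of _ (Finset.mem_filter.2 ⟨Finset.mem_univ _, h1, h2⟩)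
    (fun b hb => hmin b (Finset.mem_filter.1 hb).2.1 (Finset.mem_filter.1 hb).2.2)

theorem k0_lt_k1 (hx : Crossing tgt iI x) : k0 hx < k1 hx := by
  have h1 := k1_spec hx
  have : Meets tgt iI x (k1 hx) :=
    ⟨k0 hx, Ne.symm h1.1, v0 hx, h1.2, v0_mem hx⟩
  exact lt_of_le_of_ne (k0_min hx this) (Ne.symm h1.1)

end
end LGV
namespace LGV
section
variable {n : ℕ} {src tgt : E → V} {iI iJ : Fin n → V}
  {x : Equiv.Perm (Fin n) × (Fin n → List E)}

noncomputable def splitAt (src tgt : E → V) (i v : V) (es : List E)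
    (h : ∃ q : List E × List E, es = q.1 ++ q.2 ∧ IsPath src tgt q.1 i v) :
    List E × List E := Classical.choose h

theorem splitAt_spec (src tgt : E → V) (i v : V) (es : List E)
    (h : ∃ q : List E × List E, es = q.1 ++ q.2 ∧ IsPath src tgt q.1 i v) :
    es = (splitAt src tgt i v es h).1 ++ (splitAt src tgt i v es h).2 ∧
      IsPath src tgt (splitAt src tgt i v es h).1 i v := Classical.choose_spec h

theorem splitAt_eq (hacyclic : ∀ (v : V) (es : List E), es ≠ [] → ¬ IsPath src tgt es v v)
    {i v : V} {es a b : List E}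
    (h : ∃ q : List E × List E, es = q.1 ++ q.2 ∧ IsPath src tgt q.1 i v)
    (hab : es = a ++ b) (ha : IsPath src tgt a i v) :
    splitAt src tgt i v es h = (a, b) := by
  obtain ⟨h1, h2⟩ := splitAt_spec src tgt i v es h
  obtain ⟨e1, e2⟩ := split_unique hacyclic (h1.symm.trans hab) h2 ha
  exact Prod.ext e1 e2

theorem exists_split {es : List E} {i j v : V} (hP : IsPath src tgt es i j)
    (hv : v ∈ pvisits tgt i es) :
    ∃ q : List E × List E, es = q.1 ++ q.2 ∧ IsPath src tgt q.1 i v := by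
  obtain ⟨a, b, h1, h2, _⟩ := mem_pvisits_split hP hv
  exact ⟨(a, b), h1, h2⟩

noncomputable def q0 (hF : Fam src tgt iI iJ x) (hx : Crossing tgt iI x) :
    List E × List E :=
  splitAt src tgt (iI (k0 hx)) (v0 hx) (x.2 (k0 hx))
    (exists_split (hF (k0 hx)) (v0_mem hx))

noncomputable def q1 (hF : Fam src tgt iI iJ x) (hx : Crossing tgt iI x) :
    List E × List E :=
  splitAt src tgt (iI (k1 hx)) (v0 hx) (x.2 (k1 hx))
    (exists_split (hF (k1 hx)) ((k1_spec hx).2))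

theorem q0_spec (hF : Fam src tgt iI iJ x) (hx : Crossing tgt iI x) :
    x.2 (k0 hx) = (q0 hF hx).1 ++ (q0 hF hx).2 ∧
      IsPath src tgt (q0 hF hx).1 (iI (k0 hx)) (v0 hx) :=
  splitAt_spec _ _ _ _ _ _

theorem q1_spec (hF : Fam src tgt iI iJ x) (hx : Crossing tgt iI x) :
    x.2 (k1 hx) = (q1 hF hx).1 ++ (q1 hF hx).2 ∧
      IsPath src tgt (q1 hF hx).1 (iI (k1 hx)) (v0 hx) :=
  splitAt_spec _ _ _ _ _ _

theorem q0_snd (hF : Fam src tgt iI iJ x) (hx : Crossing tgt iI x) :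
    IsPath src tgt (q0 hF hx).2 (v0 hx) (iJ (x.1 (k0 hx))) :=
  isPath_snd (hF (k0 hx)) (q0_spec hF hx).1 (q0_spec hF hx).2

theorem q1_snd (hF : Fam src tgt iI iJ x) (hx : Crossing tgt iI x) :
    IsPath src tgt (q1 hF hx).2 (v0 hx) (iJ (x.1 (k1 hx))) :=
  isPath_snd (hF (k1 hx)) (q1_spec hF hx).1 (q1_spec hF hx).2

noncomputable def swapFam (hF : Fam src tgt iI iJ x) (hx : Crossing tgt iI x) :
    Equiv.Perm (Fin n) × (Fin n → List E) :=
  (x.1 * Equiv.swap (k0 hx) (k1 hx),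
    fun k => if k = k0 hx then (q0 hF hx).1 ++ (q1 hF hx).2
      else if k = k1 hx then (q1 hF hx).1 ++ (q0 hF hx).2 else x.2 k)

theorem swapFam_snd_k0 (hF : Fam src tgt iI iJ x) (hx : Crossing tgt iI x) :
    (swapFam hF hx).2 (k0 hx) = (q0 hF hx).1 ++ (q1 hF hx).2 := by
  simp [swapFam]

theorem swapFam_snd_k1 (hF : Fam src tgt iI iJ x) (hx : Crossing tgt iI x) :
    (swapFam hF hx).2 (k1 hx) = (q1 hF hx).1 ++ (q0 hF hx).2 := by
  simp [swapFam, (k1_spec hx).1]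

theorem swapFam_snd_other (hF : Fam src tgt iI iJ x) (hx : Crossing tgt iI x)
    {k : Fin n} (h0 : k ≠ k0 hx) (h1 : k ≠ k1 hx) :
    (swapFam hF hx).2 k = x.2 k := by
  simp [swapFam, h0, h1]

theorem swapFam_fam (hF : Fam src tgt iI iJ x) (hx : Crossing tgt iI x) :
    Fam src tgt iI iJ (swapFam hF hx) := by
  intro k
  rcases eq_or_ne k (k0 hx) with rfl | h0
  · rw [swapFam_snd_k0]
    have : (swapFam hF hx).1 (k0 hx) = x.1 (k1 hx) := by
      simp [swapFam, Equiv.Perm.mul_apply, Equiv.swap_apply_left]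
    rw [this]
    exact isPath_append.2 ⟨v0 hx, (q0_spec hF hx).2, q1_snd hF hx⟩
  rcases eq_or_ne k (k1 hx) with rfl | h1
  · rw [swapFam_snd_k1]
    have : (swapFam hF hx).1 (k1 hx) = x.1 (k0 hx) := by
      simp [swapFam, Equiv.Perm.mul_apply, Equiv.swap_apply_right]
    rw [this]
    exact isPath_append.2 ⟨v0 hx, (q1_spec hF hx).2, q0_snd hF hx⟩
  · rw [swapFam_snd_other hF hx h0 h1]
    have : (swapFam hF hx).1 k = x.1 k := by
      simp [swapFam, Equiv.Perm.mul_apply, Equiv.swap_apply_of_ne_of_ne h0 h1]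
    rw [this]
    exact hF k

theorem v0_mem_q0fst (hF : Fam src tgt iI iJ x) (hx : Crossing tgt iI x) :
    v0 hx ∈ pvisits tgt (iI (k0 hx)) (q0 hF hx).1 :=
  end_mem_pvisits (q0_spec hF hx).2

theorem v0_mem_q1fst (hF : Fam src tgt iI iJ x) (hx : Crossing tgt iI x) :
    v0 hx ∈ pvisits tgt (iI (k1 hx)) (q1 hF hx).1 :=
  end_mem_pvisits (q1_spec hF hx).2

theorem swapFam_crossing (hF : Fam src tgt iI iJ x) (hx : Crossing tgt iI x) :
    Crossing tgt iI (swapFam hF hx) := by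
  refine ⟨k0 hx, k1 hx, (k1_spec hx).1, v0 hx, ?_, ?_⟩
  · show v0 hx ∈ pvisits tgt (iI (k0 hx)) ((swapFam hF hx).2 (k0 hx))
    rw [swapFam_snd_k0, pvisits_append]
    exact List.mem_append_left _ (v0_mem_q0fst hF hx)
  · show v0 hx ∈ pvisits tgt (iI (k1 hx)) ((swapFam hF hx).2 (k1 hx))
    rw [swapFam_snd_k1, pvisits_append]
    exact List.mem_append_left _ (v0_mem_q1fst hF hx)

end
end LGV
namespace LGV
section
set_option linter.unusedSectionVars false
variable {n : ℕ} {src tgt : E → V} {iI iJ : Fin n → V}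
  {x : Equiv.Perm (Fin n) × (Fin n → List E)}
  (hacyclic : ∀ (v : V) (es : List E), es ≠ [] → ¬ IsPath src tgt es v v)
  (hF : Fam src tgt iI iJ x) (hx : Crossing tgt iI x)

theorem visX_k0 : visF tgt iI x (k0 hx) =
    pvisits tgt (iI (k0 hx)) (q0 hF hx).1 ++ ((q0 hF hx).2).map tgt := by
  rw [visF, (q0_spec hF hx).1, pvisits_append]

theorem visX_k1 : visF tgt iI x (k1 hx) =
    pvisits tgt (iI (k1 hx)) (q1 hF hx).1 ++ ((q1 hF hx).2).map tgt := by
  rw [visF, (q1_spec hF hx).1, pvisits_append]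

theorem visY_k0 : visF tgt iI (swapFam hF hx) (k0 hx) =
    pvisits tgt (iI (k0 hx)) (q0 hF hx).1 ++ ((q1 hF hx).2).map tgt := by
  rw [visF, swapFam_snd_k0, pvisits_append]

theorem visY_k1 : visF tgt iI (swapFam hF hx) (k1 hx) =
    pvisits tgt (iI (k1 hx)) (q1 hF hx).1 ++ ((q0 hF hx).2).map tgt := by
  rw [visF, swapFam_snd_k1, pvisits_append]

theorem visY_other {k : Fin n} (h0 : k ≠ k0 hx) (h1 : k ≠ k1 hx) :
    visF tgt iI (swapFam hF hx) k = visF tgt iI x k := by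
  rw [visF, swapFam_snd_other hF hx h0 h1]; rfl

theorem mem_union_swap (u : V) :
    u ∈ visF tgt iI (swapFam hF hx) (k0 hx) ∨ u ∈ visF tgt iI (swapFam hF hx) (k1 hx) ↔
    u ∈ visF tgt iI x (k0 hx) ∨ u ∈ visF tgt iI x (k1 hx) := by
  rw [visY_k0, visY_k1, visX_k0, visX_k1]
  simp only [List.mem_append]
  tauto

include hacyclic hF

theorem nodupX (k : Fin n) : (visF tgt iI x k).Nodup :=
  nodup_pvisits hacyclic (hF k)

theorem m0_eq_len : m0 hx = (q0 hF hx).1.length := by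
  have hlen : (visF tgt iI x (k0 hx)).length
      = (q0 hF hx).1.length + 1 + ((q0 hF hx).2.map tgt).length := by
    rw [visX_k0 hF hx, List.length_append, length_pvisits]
  have hb : (q0 hF hx).1.length < (visF tgt iI x (k0 hx)).length := by omega
  have hbv : (visF tgt iI x (k0 hx))[(q0 hF hx).1.length]'hb = v0 hx := by
    rw [show (visF tgt iI x (k0 hx))[(q0 hF hx).1.length]'hb
        = (pvisits tgt (iI (k0 hx)) (q0 hF hx).1)[(q0 hF hx).1.length]'
            (by rw [length_pvisits]; omega) from by
      simp only [visX_k0 hF hx]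
      exact List.getElem_append_left (by rw [length_pvisits]; omega)]
    exact pvisits_getElem_end (q0_spec hF hx).2 (by rw [length_pvisits]; omega)
  have := (nodupX hacyclic hF (k0 hx)).getElem_inj_iff (hi := m0_lt hx) (hj := hb)
  exact this.1 ((v0_eq hx).symm.trans hbv.symm)

theorem wt_swap : ∏ k, wtL ((swapFam hF hx).2 k) = ∏ k, wtL (x.2 k) := by
  have h01 : k0 hx ≠ k1 hx := ne_of_lt (k0_lt_k1 hx)
  have hmem1 : k1 hx ∈ Finset.univ.erase (k0 hx) :=
    Finset.mem_erase.2 ⟨(k1_spec hx).1, Finset.mem_univ _⟩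
  rw [← Finset.mul_prod_erase Finset.univ _ (Finset.mem_univ (k0 hx)),
    ← Finset.mul_prod_erase _ _ hmem1,
    ← Finset.mul_prod_erase Finset.univ (fun k => wtL (x.2 k)) (Finset.mem_univ (k0 hx)),
    ← Finset.mul_prod_erase _ (fun k => wtL (x.2 k)) hmem1]
  have hrest : ∀ k ∈ (Finset.univ.erase (k0 hx)).erase (k1 hx),
      wtL ((swapFam hF hx).2 k) = wtL (x.2 k) := by
    intro k hk
    obtain ⟨h1, h2, _⟩ := Finset.mem_erase.1 hk |>.imp id Finset.mem_erase.1
    rw [swapFam_snd_other hF hx h2 h1]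
  rw [Finset.prod_congr rfl hrest, swapFam_snd_k0, swapFam_snd_k1,
    (q0_spec hF hx).1, (q1_spec hF hx).1, wtL_append, wtL_append, wtL_append, wtL_append]
  ring

end
end LGV
namespace LGV
section
open Classical
set_option maxHeartbeats 1000000
set_option linter.unusedSectionVars false
variable {n : ℕ} {src tgt : E → V} {iI iJ : Fin n → V}
  {x : Equiv.Perm (Fin n) × (Fin n → List E)}
  (hacyclic : ∀ (v : V) (es : List E), es ≠ [] → ¬ IsPath src tgt es v v)
  (hF : Fam src tgt iI iJ x) (hx : Crossing tgt iI x)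

theorem v0_mem_visY_k0 : v0 hx ∈ visF tgt iI (swapFam hF hx) (k0 hx) := by
  rw [visY_k0 hF hx]
  exact List.mem_append_left _ (v0_mem_q0fst hF hx)

theorem v0_mem_visY_k1 : v0 hx ∈ visF tgt iI (swapFam hF hx) (k1 hx) := by
  rw [visY_k1 hF hx]
  exact List.mem_append_left _ (v0_mem_q1fst hF hx)

theorem k0_swap : k0 (swapFam_crossing hF hx) = k0 hx := by
  apply k0_eq
  · exact ⟨k1 hx, (k1_spec hx).1, v0 hx, v0_mem_visY_k0 hF hx, v0_mem_visY_k1 hF hx⟩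
  · intro b hb
    by_contra hlt
    push_neg at hlt
    have hb0 : b ≠ k0 hx := ne_of_lt hlt
    have hb1 : b ≠ k1 hx := ne_of_lt (lt_trans hlt (k0_lt_k1 hx))
    obtain ⟨k', hne, v, hv1, hv2⟩ := hb
    rw [visY_other hF hx hb0 hb1] at hv1
    have hm : Meets tgt iI x b := by
      rcases eq_or_ne k' (k0 hx) with rfl | hk'0
      · rcases (mem_union_swap hF hx v).1 (Or.inl hv2) with h | h
        · exact ⟨k0 hx, Ne.symm hb0, v, hv1, h⟩
        · exact ⟨k1 hx, Ne.symm hb1, v, hv1, h⟩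
      rcases eq_or_ne k' (k1 hx) with rfl | hk'1
      · rcases (mem_union_swap hF hx v).1 (Or.inr hv2) with h | h
        · exact ⟨k0 hx, Ne.symm hb0, v, hv1, h⟩
        · exact ⟨k1 hx, Ne.symm hb1, v, hv1, h⟩
      · rw [visY_other hF hx hk'0 hk'1] at hv2
        exact ⟨k', hne, v, hv1, hv2⟩
    exact absurd (k0_min hx hm) (not_le.2 hlt)

include hacyclic

theorem visY_k0_getElem_le {m : ℕ} (hm : m ≤ (q0 hF hx).1.length)
    (h1 : m < (visF tgt iI (swapFam hF hx) (k0 hx)).length) :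
    (visF tgt iI (swapFam hF hx) (k0 hx))[m]'h1
      = (pvisits tgt (iI (k0 hx)) (q0 hF hx).1)[m]'(by rw [length_pvisits]; omega) := by
  rw [List.getElem_of_eq (visY_k0 hF hx) h1]
  exact List.getElem_append_left (by rw [length_pvisits]; omega)

theorem visX_k0_getElem_le {m : ℕ} (hm : m ≤ (q0 hF hx).1.length)
    (h1 : m < (visF tgt iI x (k0 hx)).length) :
    (visF tgt iI x (k0 hx))[m]'h1
      = (pvisits tgt (iI (k0 hx)) (q0 hF hx).1)[m]'(by rw [length_pvisits]; omega) := by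
  rw [List.getElem_of_eq (visX_k0 hF hx) h1]
  exact List.getElem_append_left (by rw [length_pvisits]; omega)

theorem pvA0_getElem_end (h : (q0 hF hx).1.length < (pvisits tgt (iI (k0 hx)) (q0 hF hx).1).length) :
    (pvisits tgt (iI (k0 hx)) (q0 hF hx).1)[(q0 hF hx).1.length]'h = v0 hx :=
  pvisits_getElem_end (q0_spec hF hx).2 h

theorem pvA0_getElem_m0
    (h : m0 hx < (pvisits tgt (iI (k0 hx)) (q0 hF hx).1).length) :
    (pvisits tgt (iI (k0 hx)) (q0 hF hx).1)[m0 hx]'h = v0 hx := by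
  have hml := m0_eq_len hacyclic hF hx
  simp only [hml]
  exact pvA0_getElem_end hacyclic hF hx (by simp only [← hml]; exact hml ▸ h)

theorem lenY_k0 : (visF tgt iI (swapFam hF hx) (k0 hx)).length
    = (q0 hF hx).1.length + 1 + ((q1 hF hx).2.map tgt).length := by
  rw [visY_k0 hF hx, List.length_append, length_pvisits]

theorem lenX_k0 : (visF tgt iI x (k0 hx)).length
    = (q0 hF hx).1.length + 1 + ((q0 hF hx).2.map tgt).length := by
  rw [visX_k0 hF hx, List.length_append, length_pvisits]

theorem m0_swap : m0 (swapFam_crossing hF hx) = m0 hx := by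
  have hml := m0_eq_len hacyclic hF hx
  have hk0 := k0_swap hF hx
  apply Nat.le_antisymm
  · apply m0_le
    rw [hk0]
    have hlt : m0 hx < (visF tgt iI (swapFam hF hx) (k0 hx)).length := by
      rw [lenY_k0 hacyclic hF hx]; omega
    refine ⟨hlt, k1 hx, (k1_spec hx).1, ?_⟩
    rw [visY_k0_getElem_le hacyclic hF hx (le_of_eq hml) hlt,
      pvA0_getElem_m0 hacyclic hF hx (by rw [length_pvisits]; omega)]
    exact v0_mem_visY_k1 hF hx
  · by_contra hlt
    push_neg at hlt
    have hspec := m0_spec (swapFam_crossing hF hx)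
    simp only [hk0] at hspec
    obtain ⟨h1, k', hne, hmem⟩ := hspec
    have hmle : m0 (swapFam_crossing hF hx) < (q0 hF hx).1.length := by omega
    have hX1 : m0 (swapFam_crossing hF hx) < (visF tgt iI x (k0 hx)).length := by
      rw [lenX_k0 hacyclic hF hx]; omega
    rw [visY_k0_getElem_le hacyclic hF hx (le_of_lt hmle) h1] at hmem
    have hnot := m0_min hx hlt hX1
    apply hnot
    rw [visX_k0_getElem_le hacyclic hF hx (le_of_lt hmle) hX1]
    rcases eq_or_ne k' (k1 hx) with rfl | hk'1
    · rw [visY_k1 hF hx] at hmem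
      rcases List.mem_append.1 hmem with h | h
      · exact ⟨k1 hx, (k1_spec hx).1, by
          rw [visX_k1 hF hx]; exact List.mem_append_left _ h⟩
      · -- element of prefix pvA0 also in map tgt B0: contradicts nodup of visX k0
        exfalso
        have hnd := nodupX hacyclic hF (k0 hx)
        rw [visX_k0 hF hx] at hnd
        have hdisj := (List.nodup_append.1 hnd).2.2
        exact hdisj _ (List.getElem_mem _) _ h rfl
    · rw [visY_other hF hx hne hk'1] at hmem
      exact ⟨k', hne, hmem⟩

theorem v0_swap : v0 (swapFam_crossing hF hx) = v0 hx := by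
  rw [v0, k0_swap hF hx, m0_swap hacyclic hF hx]
  have hml := m0_eq_len hacyclic hF hx
  have hlt : m0 hx < (visF tgt iI (swapFam hF hx) (k0 hx)).length := by
    rw [lenY_k0 hacyclic hF hx]; omega
  rw [List.getD_eq_getElem _ _ hlt,
    visY_k0_getElem_le hacyclic hF hx (le_of_eq hml) hlt,
    pvA0_getElem_m0 hacyclic hF hx (by rw [length_pvisits]; omega)]

theorem k1_swap : k1 (swapFam_crossing hF hx) = k1 hx := by
  have hk0 := k0_swap hF hx
  have hv0 := v0_swap hacyclic hF hx
  apply k1_eq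
  · rw [hk0]; exact (k1_spec hx).1
  · rw [hv0]; exact v0_mem_visY_k1 hF hx
  · intro b hb0 hbv
    rw [hk0] at hb0
    rw [hv0] at hbv
    rcases eq_or_ne b (k1 hx) with rfl | hb1
    · exact le_refl _
    · rw [visY_other hF hx hb0 hb1] at hbv
      exact k1_min hx hb0 hbv

theorem swapFam_invol :
    swapFam (swapFam_fam hF hx) (swapFam_crossing hF hx) = x := by
  have hk0 := k0_swap hF hx
  have hv0 := v0_swap hacyclic hF hx
  have hk1 := k1_swap hacyclic hF hx
  have hq0' : q0 (swapFam_fam hF hx) (swapFam_crossing hF hx)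
      = ((q0 hF hx).1, (q1 hF hx).2) := by
    apply splitAt_eq hacyclic
    · rw [hk0]; exact swapFam_snd_k0 hF hx
    · rw [hk0, hv0]; exact (q0_spec hF hx).2
  have hq1' : q1 (swapFam_fam hF hx) (swapFam_crossing hF hx)
      = ((q1 hF hx).1, (q0 hF hx).2) := by
    apply splitAt_eq hacyclic
    · rw [hk1]; exact swapFam_snd_k1 hF hx
    · rw [hk1, hv0]; exact (q1_spec hF hx).2
  apply Prod.ext
  · show (swapFam hF hx).1
        * Equiv.swap (k0 (swapFam_crossing hF hx)) (k1 (swapFam_crossing hF hx)) = x.1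
    rw [hk0, hk1]
    show x.1 * Equiv.swap (k0 hx) (k1 hx) * Equiv.swap (k0 hx) (k1 hx) = x.1
    rw [mul_assoc, Equiv.swap_mul_self, mul_one]
  · funext k
    show (if k = k0 (swapFam_crossing hF hx)
        then (q0 (swapFam_fam hF hx) (swapFam_crossing hF hx)).1
          ++ (q1 (swapFam_fam hF hx) (swapFam_crossing hF hx)).2
        else if k = k1 (swapFam_crossing hF hx)
        then (q1 (swapFam_fam hF hx) (swapFam_crossing hF hx)).1
          ++ (q0 (swapFam_fam hF hx) (swapFam_crossing hF hx)).2
        else (swapFam hF hx).2 k) = x.2 k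
    rw [hk0, hk1, hq0', hq1']
    rcases eq_or_ne k (k0 hx) with rfl | h0
    · rw [if_pos rfl]
      exact (q0_spec hF hx).1.symm
    rcases eq_or_ne k (k1 hx) with rfl | h1
    · rw [if_neg h0, if_pos rfl]
      exact (q1_spec hF hx).1.symm
    · rw [if_neg h0, if_neg h1]
      exact swapFam_snd_other hF hx h0 h1

theorem swapFam_fst_ne : (swapFam hF hx).1 ≠ x.1 := by
  intro h
  have : Equiv.swap (k0 hx) (k1 hx) = 1 := by
    have := h
    rw [show (swapFam hF hx).1 = x.1 * Equiv.swap (k0 hx) (k1 hx) from rfl] at this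
    exact mul_eq_left.1 this
  exact absurd (Equiv.swap_eq_one_iff.1 this) (ne_of_lt (k0_lt_k1 hx))

end
end LGV
open LGV in
/-- The Lindström–Gessel–Viennot lemma: for a finite directed graph with no
directed cycles, `Δ_{I,J}(M) = ∑_π sgn(π) ∑_{P ∈ P_{I,J,π}} wt(P)`. -/
theorem lindstrom_gessel_viennot [Fintype V] [Fintype E] [LinearOrder V] [DecidableEq E]
    (src tgt : E → V)
    (hacyclic : ∀ (v : V) (es : List E), es ≠ [] → ¬ IsPath src tgt es v v)
    (n : ℕ) (I J : Finset V) (hI : I.card = n) (hJ : J.card = n) :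
    (Matrix.of fun a b : Fin n =>
        pathMatrix src tgt (I.orderIsoOfFin hI a : V) (J.orderIsoOfFin hJ b : V)).det =
    ∑ᶠ F : {F : Equiv.Perm (Fin n) × (Fin n → List E) //
        IsPathFamily src tgt (fun k => (I.orderIsoOfFin hI k : V))
          (fun k => (J.orderIsoOfFin hJ k : V)) F.1 F.2},
      ((Equiv.Perm.sign F.1.1 : ℤ) : MvPowerSeries E ℝ) * ∏ k, wtL (F.1.2 k) := by
  classical
  set iI : Fin n → V := fun k => (I.orderIsoOfFin hI k : V) with hiI
  set iJ : Fin n → V := fun k => (J.orderIsoOfFin hJ k : V) with hiJ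
  set w : Equiv.Perm (Fin n) × (Fin n → List E) → MvPowerSeries E ℝ :=
    fun z => ((Equiv.Perm.sign z.1 : ℤ) : MvPowerSeries E ℝ) * ∏ k, wtL (z.2 k) with hw
  set T : Finset (Equiv.Perm (Fin n) × (Fin n → List E)) :=
    Finset.univ.biUnion (fun σ : Equiv.Perm (Fin n) =>
      (Fintype.piFinset
        (fun k => (paths_finite hacyclic (iI k) (iJ (σ k))).toFinset)).image
        (fun P => (σ, P))) with hT
  have hmemT : ∀ z, z ∈ T ↔ Fam src tgt iI iJ z := by
    intro z
    simp only [hT, Finset.mem_biUnion, Finset.mem_univ, true_and, Finset.mem_image,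
      Fintype.mem_piFinset, Set.Finite.mem_toFinset, Set.mem_setOf_eq]
    constructor
    · rintro ⟨σ, P, hP, rfl⟩; exact hP
    · intro h; exact ⟨z.1, z.2, h, rfl⟩
  -- determinant as a sum over all path families
  have hdet : (Matrix.of fun a b : Fin n => pathMatrix src tgt (iI a) (iJ b)).det
      = ∑ z ∈ T, w z := by
    rw [← Matrix.det_transpose, Matrix.det_apply']
    have hentry : ∀ σ : Equiv.Perm (Fin n),
        (∏ k, (Matrix.of fun a b : Fin n =>
            pathMatrix src tgt (iI a) (iJ b)).transpose (σ k) k)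
        = ∑ P ∈ Fintype.piFinset
            (fun k => (paths_finite hacyclic (iI k) (iJ (σ k))).toFinset),
            ∏ k, wtL (P k) := by
      intro σ
      rw [← Finset.prod_univ_sum]
      refine Finset.prod_congr rfl fun k _ => ?_
      show pathMatrix src tgt (iI k) (iJ (σ k)) = _
      exact pathMatrix_eq hacyclic _ _
    rw [Finset.sum_congr rfl (fun σ _ => by rw [hentry σ, Finset.mul_sum])]
    have hdisj : (↑(Finset.univ : Finset (Equiv.Perm (Fin n))) :
        Set (Equiv.Perm (Fin n))).PairwiseDisjoint
        (fun σ => (Fintype.piFinset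
          (fun k => (paths_finite hacyclic (iI k) (iJ (σ k))).toFinset)).image
          (fun P => (σ, P))) := by
      intro a _ b _ hab
      rw [Function.onFun, Finset.disjoint_left]
      intro z hza hzb
      obtain ⟨P, _, rfl⟩ := Finset.mem_image.1 hza
      obtain ⟨Q, _, hQ⟩ := Finset.mem_image.1 hzb
      exact hab (congrArg Prod.fst hQ).symm
    rw [hT, Finset.sum_biUnion hdisj]
    refine Finset.sum_congr rfl fun σ _ => ?_
    rw [Finset.sum_image (fun a _ b _ h => congrArg Prod.snd h)]
  -- the right-hand side as a finite sum
  have hRHS : (∑ᶠ F : {F : Equiv.Perm (Fin n) × (Fin n → List E) //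
        IsPathFamily src tgt iI iJ F.1 F.2},
        ((Equiv.Perm.sign F.1.1 : ℤ) : MvPowerSeries E ℝ) * ∏ k, wtL (F.1.2 k))
      = ∑ z ∈ T.filter (fun z => IsPathFamily src tgt iI iJ z.1 z.2), w z := by
    have h0 : (∑ᶠ F : {F : Equiv.Perm (Fin n) × (Fin n → List E) //
          IsPathFamily src tgt iI iJ F.1 F.2},
          ((Equiv.Perm.sign F.1.1 : ℤ) : MvPowerSeries E ℝ) * ∏ k, wtL (F.1.2 k))
        = ∑ᶠ F : {F : Equiv.Perm (Fin n) × (Fin n → List E) //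
          IsPathFamily src tgt iI iJ F.1 F.2}, w F.1 := rfl
    rw [h0, finsum_subtype_eq_finsum_cond]
    have h1 : ∀ z : Equiv.Perm (Fin n) × (Fin n → List E),
        (∑ᶠ _ : IsPathFamily src tgt iI iJ z.1 z.2, w z)
        = ∑ᶠ _ : z ∈ (↑(T.filter (fun z => IsPathFamily src tgt iI iJ z.1 z.2)) :
            Set (Equiv.Perm (Fin n) × (Fin n → List E))), w z := by
      intro z
      refine finsum_congr_Prop (propext ⟨fun h => ?_, fun h => ?_⟩) (fun _ => rfl)
      · exact Finset.mem_coe.2 (Finset.mem_filter.2 ⟨(hmemT z).2 h.1, h⟩)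
      · exact (Finset.mem_filter.1 (Finset.mem_coe.1 h)).2
    rw [finsum_congr h1, finsum_mem_coe_finset]
  -- proofs attached to crossing families
  have hFamOf : ∀ z ∈ T.filter (fun z => ¬ IsPathFamily src tgt iI iJ z.1 z.2),
      Fam src tgt iI iJ z :=
    fun z hz => (hmemT z).1 (Finset.mem_filter.1 hz).1
  have hcrOf : ∀ z (hz : z ∈ T.filter (fun z => ¬ IsPathFamily src tgt iI iJ z.1 z.2)),
      Crossing tgt iI z := by
    intro z hz
    have hfam := hFamOf z hz
    have hnot := (Finset.mem_filter.1 hz).2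
    by_contra hnc
    apply hnot
    refine ⟨hfam, fun k => nodup_pvisits hacyclic (hfam k), ?_⟩
    intro k k' hkk' v hv hv'
    exact hnc ⟨k, k', Ne.symm hkk', v, hv, hv'⟩
  -- the crossing part sums to zero
  have hzero : ∑ z ∈ T.filter (fun z => ¬ IsPathFamily src tgt iI iJ z.1 z.2), w z = 0 := by
    refine Finset.sum_involution (fun z hz => swapFam (hFamOf z hz) (hcrOf z hz))
      (fun z hz => ?_) (fun z hz _ => ?_) (fun z hz => ?_) (fun z hz => ?_)
    · -- sums to zero
      have hs : ((Equiv.Perm.sign (swapFam (hFamOf z hz) (hcrOf z hz)).1 : ℤ)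
          : MvPowerSeries E ℝ) = -(((Equiv.Perm.sign z.1 : ℤ)) : MvPowerSeries E ℝ) := by
        have h2 : (swapFam (hFamOf z hz) (hcrOf z hz)).1
            = z.1 * Equiv.swap (k0 (hcrOf z hz)) (k1 (hcrOf z hz)) := rfl
        have h3 : (Equiv.Perm.sign (swapFam (hFamOf z hz) (hcrOf z hz)).1 : ℤ)
            = -(Equiv.Perm.sign z.1 : ℤ) := by
          rw [h2, map_mul, Equiv.Perm.sign_swap (ne_of_lt (k0_lt_k1 (hcrOf z hz)))]
          simp
        rw [h3]
        push_cast
        ring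
      have hwt := wt_swap hacyclic (hFamOf z hz) (hcrOf z hz)
      simp only [hw]
      rw [hwt, hs]
      ring
    · -- not a fixed point
      intro heq
      exact swapFam_fst_ne hacyclic (hFamOf z hz) (hcrOf z hz) (congrArg Prod.fst heq)
    · -- stays in the crossing set
      refine Finset.mem_filter.2 ⟨(hmemT _).2 (swapFam_fam (hFamOf z hz) (hcrOf z hz)), ?_⟩
      intro hPF
      obtain ⟨k, k', hne, v, hv, hv'⟩ := swapFam_crossing (hFamOf z hz) (hcrOf z hz)
      exact hPF.2.2 k k' (Ne.symm hne) v hv hv'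
    · -- involution
      exact swapFam_invol hacyclic (hFamOf z hz) (hcrOf z hz)
  rw [hdet, hRHS, ← Finset.sum_filter_add_sum_filter_not T
    (fun z => IsPathFamily src tgt iI iJ z.1 z.2) w, hzero, add_zero]
end

section
/- Uniqueness of weights up to gauge: let N = (V,E) be a directed network on a closed orientable surface with boundary such that every vertex lies on some directed path between boundary vertices. If two weight assignments X = {a_e x_e} and Y = {b_e x_e} (with a_e, b_e ∈ ℝ*) satisfy A(N, X) = A(N, Y), then there exists a gauge group element g ∈ (ℝ*)^{int(V)} with g·X = Y. Combined with gauge invariance, A(N,X) = A(N,Y) holds if and only if X and Y are gauge equivalent. -/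
variable {V E : Type*}

/-- The `(i,j)` entry of `A(N, {a_e x_e})`: `∑_{P : i ⇝ j} (∏_{e ∈ P} a_e) wt(P)`. -/
noncomputable def wEntry [DecidableEq E] (src tgt : E → V) (c : List E → ℝ) (i j : V) :
    MvPowerSeries E ℝ :=
  fun d => ∑ᶠ es : {es : List E // IsPath src tgt es i j ∧ expOf es = d}, c es.1

lemma isPath_nil {src tgt : E → V} {i j : V} :
    IsPath src tgt ([] : List E) i j ↔ i = j := by
  simp [IsPath, eq_comm]

lemma isPath_cons {src tgt : E → V} {e : E} {es : List E} {i j : V} :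
    IsPath src tgt (e :: es) i j ↔ src e = i ∧ IsPath src tgt es (tgt e) j := by
  simp [IsPath]

lemma isPath_append {src tgt : E → V} {es1 es2 : List E} {i v j : V}
    (h1 : IsPath src tgt es1 i v) (h2 : IsPath src tgt es2 v j) :
    IsPath src tgt (es1 ++ es2) i j := by
  induction es1 generalizing i with
  | nil => rw [isPath_nil] at h1; subst h1; exact h2
  | cons e es ih => rw [isPath_cons] at h1; rw [List.cons_append, isPath_cons]; exact ⟨h1.1, ih h1.2⟩

lemma isPath_split {src tgt : E → V} {es : List E} {i j v : V}
    (h : IsPath src tgt es i j) (hv : v ∈ pvisits tgt i es) :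
    ∃ es1 es2, es = es1 ++ es2 ∧ IsPath src tgt es1 i v ∧ IsPath src tgt es2 v j := by
  induction es generalizing i with
  | nil =>
    simp [pvisits] at hv; subst hv
    exact ⟨[], [], rfl, isPath_nil.2 rfl, h⟩
  | cons e es ih =>
    rw [isPath_cons] at h
    rcases List.mem_cons.1 hv with rfl | hv'
    · exact ⟨[], e :: es, rfl, isPath_nil.2 rfl, isPath_cons.2 h⟩
    · obtain ⟨es1, es2, heq, h1, h2⟩ := ih h.2 (by simpa [pvisits] using hv')
      exact ⟨e :: es1, es2, by rw [List.cons_append, heq], isPath_cons.2 ⟨h.1, h1⟩, h2⟩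

lemma expOf_eq_toFinsupp [DecidableEq E] (es : List E) :
    expOf es = Multiset.toFinsupp (es : Multiset E) := by
  induction es with
  | nil => simp [expOf]
  | cons e es ih =>
    show Finsupp.single e 1 + (es.map fun e => Finsupp.single e 1).sum = _
    rw [show ((e :: es : List E) : Multiset E) = {e} + (es : Multiset E) by
        simp [Multiset.cons_eq_cons],
      Multiset.toFinsupp_add, Multiset.toFinsupp_singleton, ← expOf, ih]

lemma perm_of_expOf_eq [DecidableEq E] {es es' : List E} (h : expOf es = expOf es') :
    es.Perm es' := by
  rw [expOf_eq_toFinsupp, expOf_eq_toFinsupp] at h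
  have := Multiset.toFinsupp.injective h
  exact Quotient.exact this

lemma prod_ne_zero {c : E → ℝ} (hc : ∀ e, c e ≠ 0) (es : List E) :
    (es.map c).prod ≠ 0 := by
  induction es with
  | nil => simp
  | cons e es ih => simpa using mul_ne_zero (hc e) ih

lemma key_prod_eq [DecidableEq E] {src tgt : E → V} {a b : E → ℝ} {i j : V}
    (h : wEntry src tgt (fun es => (es.map a).prod) i j =
         wEntry src tgt (fun es => (es.map b).prod) i j)
    {es : List E} (hes : IsPath src tgt es i j) :
    (es.map a).prod = (es.map b).prod := by
  have hd := congrFun h (expOf es)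
  simp only [wEntry] at hd
  set T := {es' : List E // IsPath src tgt es' i j ∧ expOf es' = expOf es} with hT
  have hfin : Finite T := by
    have : {es' : List E | IsPath src tgt es' i j ∧ expOf es' = expOf es}.Finite := by
      apply Set.Finite.subset es.permutations.finite_toSet
      intro l hl
      simpa [List.mem_permutations] using perm_of_expOf_eq hl.2
    exact this.to_subtype
  haveI : Fintype T := Fintype.ofFinite T
  rw [finsum_eq_sum_of_fintype, finsum_eq_sum_of_fintype] at hd
  have hca : ∀ x : T, ((x.1.map a).prod) = (es.map a).prod := fun x =>
    ((perm_of_expOf_eq x.2.2).map a).prod_eq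
  have hcb : ∀ x : T, ((x.1.map b).prod) = (es.map b).prod := fun x =>
    ((perm_of_expOf_eq x.2.2).map b).prod_eq
  rw [Finset.sum_congr rfl (fun x _ => hca x), Finset.sum_congr rfl (fun x _ => hcb x),
    Finset.sum_const, Finset.sum_const] at hd
  haveI : Nonempty T := ⟨⟨es, hes, rfl⟩⟩
  have hcard : ((Fintype.card T : ℝ)) ≠ 0 := by
    exact_mod_cast Fintype.card_ne_zero
  simp only [Finset.card_univ, nsmul_eq_mul] at hd
  exact mul_left_cancel₀ hcard hd

/-- Theorem 5.2 of the paper (uniqueness of weights up to gauge): for a directed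
network in which every vertex lies on some directed path from a boundary source to a
boundary vertex, two weight assignments `X = {a_e x_e}` and `Y = {b_e x_e}` (with
`a_e, b_e ∈ ℝ*`) satisfy `A(N, X) = A(N, Y)` if and only if they are gauge
equivalent: there is `g : V → ℝ*` with `g = 1` on boundary vertices and
`b_{(u,v)} = g_v⁻¹ a_{(u,v)} g_u` for every edge. -/
theorem gauge_uniqueness [DecidableEq E] (src tgt : E → V)
    (K I : Finset V) (hIK : I ⊆ K)
    (hcover : ∀ v : V, ∃ i ∈ I, ∃ j ∈ K, ∃ es : List E,
      IsPath src tgt es i j ∧ v ∈ pvisits tgt i es)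
    (a b : E → ℝ) (ha : ∀ e, a e ≠ 0) (hb : ∀ e, b e ≠ 0) :
    (∀ i ∈ I, ∀ j ∈ K,
        wEntry src tgt (fun es => (es.map a).prod) i j =
          wEntry src tgt (fun es => (es.map b).prod) i j) ↔
      ∃ g : V → ℝ, (∀ v, g v ≠ 0) ∧ (∀ v ∈ K, g v = 1) ∧
        ∀ e : E, b e = (g (tgt e))⁻¹ * a e * g (src e) := by
  constructor
  · intro h
    -- key fact: products agree on all boundary-to-boundary paths
    have key : ∀ i ∈ I, ∀ j ∈ K, ∀ es : List E, IsPath src tgt es i j →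
        (es.map a).prod = (es.map b).prod := fun i hi j hj es hes =>
      key_prod_eq (h i hi j hj) hes
    choose i hi j hj es hes hv using hcover
    have split : ∀ v, ∃ p q, es v = p ++ q ∧ IsPath src tgt p (i v) v ∧
        IsPath src tgt q v (j v) := fun v => isPath_split (hes v) (hv v)
    choose p q hpq hp hq using split
    set g : V → ℝ := fun v => ((p v).map a).prod * (((p v).map b).prod)⁻¹ with hg
    have hane := prod_ne_zero ha
    have hbne := prod_ne_zero hb
    -- the key well-definedness lemma
    have glem : ∀ (v : V) (es1 : List E) (i' : V), i' ∈ I → IsPath src tgt es1 i' v →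
        ((es1.map a).prod) * (((es1.map b).prod))⁻¹ = g v := by
      intro v es1 i' hi' h1
      have e1 := key i' hi' (j v) (hj v) (es1 ++ q v) (isPath_append h1 (hq v))
      have e2 := key (i v) (hi v) (j v) (hj v) (p v ++ q v) ((hpq v) ▸ hes v)
      simp only [List.map_append, List.prod_append] at e1 e2
      show (es1.map a).prod * ((es1.map b).prod)⁻¹ =
        ((p v).map a).prod * (((p v).map b).prod)⁻¹
      have hqb := hbne (q v)
      have hqa := hane (q v)
      have h1b := hbne es1
      have hpb := hbne (p v)
      have r1 : (es1.map a).prod * ((es1.map b).prod)⁻¹ =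
          ((q v).map b).prod * (((q v).map a).prod)⁻¹ := by
        field_simp
        linear_combination e1
      have r2 : ((p v).map a).prod * (((p v).map b).prod)⁻¹ =
          ((q v).map b).prod * (((q v).map a).prod)⁻¹ := by
        field_simp
        linear_combination e2
      rw [r1, r2]
    refine ⟨g, ?_, ?_, ?_⟩
    · intro v
      exact mul_ne_zero (hane _) (inv_ne_zero (hbne _))
    · intro v hvK
      have := key (i v) (hi v) v hvK (p v) (hp v)
      show ((p v).map a).prod * (((p v).map b).prod)⁻¹ = 1
      rw [this, mul_inv_cancel₀ (hbne _)]
    · intro e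
      have hsingle : IsPath src tgt [e] (src e) (tgt e) :=
        isPath_cons.2 ⟨rfl, isPath_nil.2 rfl⟩
      have hgu : ((p (src e)).map a).prod * (((p (src e)).map b).prod)⁻¹ = g (src e) := rfl
      have hgv := glem (tgt e) (p (src e) ++ [e]) (i (src e)) (hi (src e))
        (isPath_append (hp (src e)) hsingle)
      simp only [List.map_append, List.prod_append, List.map_cons, List.map_nil,
        List.prod_cons, List.prod_nil, mul_one] at hgv
      -- hgv : pa (p u) * a e * (pb (p u) * b e)⁻¹ = g (tgt e)
      have hpa := hane (p (src e))
      have hpb := hbne (p (src e))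
      rw [← hgv, ← hgu]
      rw [mul_inv, mul_inv]
      field_simp
      exact (mul_div_cancel_right₀ _ (ha e)).symm
  · rintro ⟨g, hg0, hgK, hge⟩ i hi j hj
    have tel : ∀ (es : List E) (i j : V), IsPath src tgt es i j →
        (es.map b).prod = (g j)⁻¹ * (es.map a).prod * g i := by
      intro es
      induction es with
      | nil =>
        intro i j hij
        rw [isPath_nil] at hij; subst hij
        simp [inv_mul_cancel₀ (hg0 i)]
      | cons e es ih =>
        intro i j hij
        rw [isPath_cons] at hij
        obtain ⟨he, h2⟩ := hij
        simp only [List.map_cons, List.prod_cons]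
        rw [ih _ _ h2, hge e, ← he]
        have h3 := hg0 (tgt e)
        field_simp
    funext d
    simp only [wEntry]
    apply finsum_congr
    rintro ⟨l, hl, -⟩
    have := tel l i j hl
    rw [hgK i (hIK hi), hgK j hj] at this
    simpa using this.symm
end
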